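/- Let G be a graph, θ a positive integer, ℮ an edge-tangle of order θ in G, and (T,𝒳) a tree-cut decomposition of G. Then there exists a unique θ-cell C of (T,𝒳) (where we allow pseudo-θ-cells and prove the selected one is a θ-cell) such that for every edge e of T with at most one end in V(C) and with adhesion set of size less than θ, the edge-cut [A_{e,C}, B_{e,C}] belongs to ℮, where B_{e,C} is the union of the bags in the component of T−e containing C and A_{e,C} is its complement. -/

import Mathlib

/-- A finite multigraph (loops and parallel edges allowed): each edge in `E`
has an unordered pair of endpoints in `V`. -/
structure Multigraph (V E : Type) where
  ends : E → Sym2 V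

namespace Multigraph

variable {V E : Type}

/-- The edge `e` has an end in the vertex set `A`. -/
def incident (G : Multigraph V E) (A : Set V) (e : E) : Prop :=
  ∃ x ∈ G.ends e, x ∈ A

/-- The edge `e` has one end in `A` and one end in `B`. -/
def crosses (G : Multigraph V E) (A B : Set V) (e : E) : Prop :=
  G.incident A e ∧ G.incident B e

/-- The order of the edge-cut `[A,B]`: the number of edges with one end in `A`
and one end in `B`. -/
noncomputable def cutOrder (G : Multigraph V E) (A B : Set V) : ℕ :=
  {e | G.crosses A B e}.ncard

/-- `[A,B]` is an edge-cut of `G`: an ordered pair of disjoint vertex sets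
covering all vertices. -/
def IsCut (G : Multigraph V E) (A B : Set V) : Prop :=
  Disjoint A B ∧ A ∪ B = Set.univ

end Multigraph

/-- An edge-tangle of order `θ` in `G`: a set of edge-cuts of order less than
`θ` satisfying axioms (E1)-(E3). -/
structure EdgeTangle {V E : Type} (G : Multigraph V E) (θ : ℕ) where
  mem : Set V → Set V → Prop
  isCut_of_mem : ∀ A B, mem A B → G.IsCut A B
  order_lt_of_mem : ∀ A B, mem A B → G.cutOrder A B < θ
  e1 : ∀ A B, G.IsCut A B → G.cutOrder A B < θ → mem A B ∨ mem B A
  e2 : ∀ A₁ B₁ A₂ B₂ A₃ B₃, mem A₁ B₁ → mem A₂ B₂ → mem A₃ B₃ →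
    (B₁ ∩ B₂ ∩ B₃).Nonempty
  e3 : ∀ A B, mem A B → θ ≤ {e | G.incident B e}.ncard

/-- A tree-cut decomposition of `G`: a (finite) tree `T` together with pairwise
disjoint bags partitioning `V(G)`. -/
structure TreeCutDecomp {V E : Type} (G : Multigraph V E) (T : Type) where
  tree : SimpleGraph T
  isTree : tree.IsTree
  finite : Finite T
  bag : T → Set V
  disjoint_bags : ∀ s t : T, s ≠ t → Disjoint (bag s) (bag t)
  cover : ∀ v : V, ∃ t : T, v ∈ bag t

namespace TreeCutDecomp

variable {V E T : Type} {G : Multigraph V E}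

/-- The set of nodes of the component of `T - t₁t₂` containing `t₁`. -/
def side (D : TreeCutDecomp G T) (t₁ t₂ : T) : Set T :=
  {s | Relation.ReflTransGen
    (fun x y => D.tree.Adj x y ∧ ¬(x = t₁ ∧ y = t₂) ∧ ¬(x = t₂ ∧ y = t₁)) t₁ s}

/-- The union of the bags over the component of `T - t₁t₂` containing `t₁`. -/
def sideBags (D : TreeCutDecomp G T) (t₁ t₂ : T) : Set V :=
  ⋃ s ∈ D.side t₁ t₂, D.bag s

/-- The adhesion set of the tree edge `t₁t₂`: the edges of `G` with one end in
the bags on the `t₁` side and one end in the bags on the `t₂` side. -/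
def adhEdges (D : TreeCutDecomp G T) (t₁ t₂ : T) : Set E :=
  {e | G.crosses (D.sideBags t₁ t₂) (D.sideBags t₂ t₁) e}

/-- `x` and `y` are joined by a path of `T` avoiding the node set `C`. -/
def compRel (D : TreeCutDecomp G T) (C : Set T) (x y : T) : Prop :=
  Relation.ReflTransGen (fun a b => D.tree.Adj a b ∧ a ∉ C ∧ b ∉ C) x y

/-- The union of the bags over the component of `T - C` containing `s`. -/
def compBags (D : TreeCutDecomp G T) (C : Set T) (s : T) : Set V :=
  ⋃ s' ∈ {s' | D.compRel C s s'}, D.bag s'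

/-- The edges of the torso at `C`, viewed as edges of `G`: those edges having
no component of `T - C` whose bags contain all their ends. -/
def torsoEdges (D : TreeCutDecomp G T) (C : Set T) : Set E :=
  {e | ¬ ∃ s : T, s ∉ C ∧ ∀ x ∈ G.ends e, x ∈ D.compBags C s}

/-- `x` and `y` are joined in the forest obtained from `T` by deleting all edges
whose adhesion set has fewer than `θ` elements. -/
def cellRel (D : TreeCutDecomp G T) (θ : ℕ) (x y : T) : Prop :=
  Relation.ReflTransGen (fun a b => D.tree.Adj a b ∧ θ ≤ (D.adhEdges a b).ncard) x y

/-- A pseudo-`θ`-cell: a component of the forest obtained from `T` by deleting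
all edges whose adhesion set has size less than `θ`. -/
def IsPseudoCell (D : TreeCutDecomp G T) (θ : ℕ) (C : Set T) : Prop :=
  ∃ t : T, C = {s | D.cellRel θ t s}

/-- A `θ`-cell: a pseudo-`θ`-cell whose torso has at least `θ` edges. -/
def IsCell (D : TreeCutDecomp G T) (θ : ℕ) (C : Set T) : Prop :=
  D.IsPseudoCell θ C ∧ θ ≤ (D.torsoEdges C).ncard

/-- `(T,𝒳)` is `θ`-smooth. -/
def Smooth (D : TreeCutDecomp G T) (θ : ℕ) : Prop :=
  ∀ C : Set T, (D.IsCell θ C ∨ ∃ t : T, C = {t}) →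
    ∀ Y Z : Set E, Y ⊆ D.torsoEdges C → Z ⊆ D.torsoEdges C →
      Y.ncard = Z.ncard → Y.ncard ≤ θ →
      ¬ ∃ A B : Set V, G.IsCut A B ∧ G.cutOrder A B < Y.ncard ∧
        (∀ e ∈ Y, G.incident A e) ∧ (∀ e ∈ Z, G.incident B e)

end TreeCutDecomp

namespace TCAux
open Relation Set TreeCutDecomp Multigraph

variable {V E T : Type} {G : Multigraph V E}

lemma adh_symm (D : TreeCutDecomp G T) (a b : T) : D.adhEdges a b = D.adhEdges b a := by
  ext e; exact and_comm

lemma side_self (D : TreeCutDecomp G T) (a b : T) : a ∈ D.side a b := ReflTransGen.refl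

lemma side_closed (D : TreeCutDecomp G T) {a b x y : T} (hx : x ∈ D.side a b)
    (hadj : D.tree.Adj x y) (h1 : ¬(x = a ∧ y = b)) (h2 : ¬(x = b ∧ y = a)) :
    y ∈ D.side a b := ReflTransGen.tail hx ⟨hadj, h1, h2⟩

lemma avoid_symm (D : TreeCutDecomp G T) (a b : T) :
    Symmetric (fun x y => D.tree.Adj x y ∧ ¬(x = a ∧ y = b) ∧ ¬(x = b ∧ y = a)) := by
  rintro x y ⟨h, h1, h2⟩
  exact ⟨h.symm, fun ⟨p, q⟩ => h2 ⟨q, p⟩, fun ⟨p, q⟩ => h1 ⟨q, p⟩⟩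

/-- anything reachable from a member of a side (avoiding the edge) is in the side -/
lemma side_mem_of_reflTransGen (D : TreeCutDecomp G T) {a b x y : T}
    (hx : x ∈ D.side a b)
    (h : Relation.ReflTransGen
      (fun x y => D.tree.Adj x y ∧ ¬(x = a ∧ y = b) ∧ ¬(x = b ∧ y = a)) x y) :
    y ∈ D.side a b := ReflTransGen.trans hx h

lemma mem_side_symm (D : TreeCutDecomp G T) {a b s : T} (hs : s ∈ D.side a b) :
    Relation.ReflTransGen
      (fun x y => D.tree.Adj x y ∧ ¬(x = a ∧ y = b) ∧ ¬(x = b ∧ y = a)) s a :=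
  @Std.Symm.symm _ _ (@Relation.ReflTransGen.stdSymm _ _ ⟨fun _ _ h => avoid_symm D a b h⟩) _ _ hs

lemma side_union (D : TreeCutDecomp G T) {a b : T} (hab : D.tree.Adj a b) (s : T) :
    s ∈ D.side a b ∪ D.side b a := by
  have hr : Relation.ReflTransGen D.tree.Adj a s := by
    rw [← SimpleGraph.reachable_iff_reflTransGen]
    exact D.isTree.isConnected.preconnected a s
  induction hr with
  | refl => exact Or.inl (side_self D a b)
  | tail _ hadj ih =>
    rename_i x y _
    by_cases h1 : x = a ∧ y = b
    · exact Or.inr (h1.2 ▸ side_self D b a)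
    by_cases h2 : x = b ∧ y = a
    · exact Or.inl (h2.2 ▸ side_self D a b)
    rcases ih with h | h
    · exact Or.inl (side_closed D h hadj h1 h2)
    · exact Or.inr (side_closed D h hadj (fun ⟨p, q⟩ => h2 ⟨p, q⟩) (fun ⟨p, q⟩ => h1 ⟨p, q⟩))

lemma side_disjoint (D : TreeCutDecomp G T) {a b : T} (hab : D.tree.Adj a b) :
    Disjoint (D.side a b) (D.side b a) := by
  rw [Set.disjoint_left]
  intro s hsa hsb
  have hbridge : D.tree.IsBridge s(a, b) :=
    SimpleGraph.isAcyclic_iff_forall_adj_isBridge.mp D.isTree.IsAcyclic hab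
  rw [SimpleGraph.isBridge_iff] at hbridge
  apply hbridge
  have key : ∀ c d : T, (∀ x y, (D.tree.Adj x y ∧ ¬(x = c ∧ y = d) ∧ ¬(x = d ∧ y = c)) →
      (D.tree \ SimpleGraph.fromEdgeSet {s(a, b)}).Adj x y) → True := fun _ _ _ => trivial
  have conv : ∀ {x y : T}, Relation.ReflTransGen
      (fun x y => D.tree.Adj x y ∧ ¬(x = a ∧ y = b) ∧ ¬(x = b ∧ y = a)) x y →
      (D.tree \ SimpleGraph.fromEdgeSet {s(a, b)}).Reachable x y := by
    intro x y h
    rw [SimpleGraph.reachable_iff_reflTransGen]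
    refine Relation.ReflTransGen.mono ?_ _ _ h
    rintro u v ⟨hadj, h1, h2⟩
    rw [SimpleGraph.sdiff_adj]
    refine ⟨hadj, ?_⟩
    rw [SimpleGraph.fromEdgeSet_adj]
    rintro ⟨he, -⟩
    rw [Set.mem_singleton_iff, Sym2.eq_iff] at he
    rcases he with ⟨rfl, rfl⟩ | ⟨rfl, rfl⟩
    · exact h1 ⟨rfl, rfl⟩
    · exact h2 ⟨rfl, rfl⟩
  have conv2 : ∀ {x y : T}, Relation.ReflTransGen
      (fun x y => D.tree.Adj x y ∧ ¬(x = b ∧ y = a) ∧ ¬(x = a ∧ y = b)) x y →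
      (D.tree \ SimpleGraph.fromEdgeSet {s(a, b)}).Reachable x y := by
    intro x y h
    exact conv (Relation.ReflTransGen.mono
      (fun u v ⟨h0, h1, h2⟩ => ⟨h0, h2, h1⟩) _ _ h)
  exact ((conv hsa).trans (conv2 hsb).symm)

lemma side_compl (D : TreeCutDecomp G T) {a b : T} (hab : D.tree.Adj a b) :
    D.side b a = (D.side a b)ᶜ := by
  ext s
  constructor
  · intro h
    exact fun h' => Set.disjoint_left.mp (side_disjoint D hab) h' h
  · intro h
    rcases side_union D hab s with h2 | h2
    · exact absurd h2 h
    · exact h2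

/-- union of bags over a node set -/
def BB (D : TreeCutDecomp G T) (U : Set T) : Set V := ⋃ s ∈ U, D.bag s

lemma sideBags_eq_BB (D : TreeCutDecomp G T) (a b : T) :
    D.sideBags a b = BB D (D.side a b) := rfl

lemma bag_unique (D : TreeCutDecomp G T) {v : V} {s s' : T}
    (h : v ∈ D.bag s) (h' : v ∈ D.bag s') : s = s' := by
  by_contra hne
  exact Set.disjoint_left.mp (D.disjoint_bags s s' hne) h h'

lemma BB_compl (D : TreeCutDecomp G T) (U : Set T) : BB D Uᶜ = (BB D U)ᶜ := by
  ext v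
  simp only [BB, Set.mem_iUnion, Set.mem_compl_iff, exists_prop]
  constructor
  · rintro ⟨s, hs, hv⟩ ⟨s', hs', hv'⟩
    exact hs (bag_unique D hv hv' ▸ hs')
  · intro h
    obtain ⟨s, hs⟩ := D.cover v
    exact ⟨s, fun hsU => h ⟨s, hsU, hs⟩, hs⟩

lemma BB_mono (D : TreeCutDecomp G T) {U W : Set T} (h : U ⊆ W) : BB D U ⊆ BB D W := by
  intro v hv
  simp only [BB, Set.mem_iUnion, exists_prop] at hv ⊢
  obtain ⟨s, hs, hv⟩ := hv
  exact ⟨s, h hs, hv⟩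

lemma isCut_BB (D : TreeCutDecomp G T) (U : Set T) : G.IsCut (BB D U) (BB D U)ᶜ :=
  ⟨disjoint_compl_right, Set.union_compl_self _⟩

lemma sideBags_compl (D : TreeCutDecomp G T) {a b : T} (hab : D.tree.Adj a b) :
    D.sideBags b a = (D.sideBags a b)ᶜ := by
  rw [sideBags_eq_BB, sideBags_eq_BB, side_compl D hab, BB_compl]

lemma side_cut (D : TreeCutDecomp G T) {a b : T} (hab : D.tree.Adj a b) :
    G.IsCut (D.sideBags a b) (D.sideBags b a) := by
  rw [sideBags_compl D hab, sideBags_eq_BB]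
  exact isCut_BB D _

lemma side_cutOrder (D : TreeCutDecomp G T) (a b : T) :
    G.cutOrder (D.sideBags a b) (D.sideBags b a) = (D.adhEdges a b).ncard := rfl

section Tangle
variable {θ : ℕ} (ℰ : EdgeTangle G θ)

lemma not_mem_both {A B A' B' : Set V} (h : ℰ.mem A B) (h' : ℰ.mem A' B')
    (hd : Disjoint B B') : False := by
  obtain ⟨v, hv⟩ := ℰ.e2 A B A' B' A B h h' h
  exact Set.disjoint_left.mp hd hv.1.1 hv.1.2

lemma mem_empty_univ (hθ : 0 < θ) : ℰ.mem ∅ Set.univ := by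
  have hcut : G.IsCut (∅ : Set V) Set.univ := ⟨Set.disjoint_left.mpr (fun _ h => h.elim), by simp⟩
  have horder : G.cutOrder (∅ : Set V) Set.univ < θ := by
    have : {e | G.crosses ∅ Set.univ e} = ∅ := by
      ext e
      simp only [Set.mem_setOf_eq, Set.mem_empty_iff_false, iff_false]
      rintro ⟨⟨x, -, hx⟩, -⟩
      exact hx
    rw [Multigraph.cutOrder, this, Set.ncard_empty]
    exact hθ
  rcases ℰ.e1 _ _ hcut horder with h | h
  · exact h
  · exfalso
    have := ℰ.e3 _ _ h
    have hempty : {e | G.incident (∅ : Set V) e} = ∅ := by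
      ext e
      simp only [Set.mem_setOf_eq, Set.mem_empty_iff_false, iff_false]
      rintro ⟨x, -, hx⟩
      exact hx
    rw [hempty, Set.ncard_empty] at this
    omega

/-- orientation: each small tree edge has exactly one tangle direction -/
lemma orient (D : TreeCutDecomp G T) {a b : T} (hab : D.tree.Adj a b)
    (hsmall : (D.adhEdges a b).ncard < θ) :
    ℰ.mem (D.sideBags a b) (D.sideBags b a) ∨ ℰ.mem (D.sideBags b a) (D.sideBags a b) :=
  ℰ.e1 _ _ (side_cut D hab) (by rw [side_cutOrder]; exact hsmall)

lemma not_both_orient (D : TreeCutDecomp G T) {a b : T} (hab : D.tree.Adj a b)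
    (h1 : ℰ.mem (D.sideBags a b) (D.sideBags b a))
    (h2 : ℰ.mem (D.sideBags b a) (D.sideBags a b)) : False := by
  apply not_mem_both ℰ h1 h2
  rw [sideBags_compl D hab]
  exact disjoint_compl_left

/-- two mem-oriented side cuts have intersecting B-side node sets -/
lemma meet (D : TreeCutDecomp G T) {a b c d : T}
    (h1 : ℰ.mem (D.sideBags b a) (D.sideBags a b))
    (h2 : ℰ.mem (D.sideBags d c) (D.sideBags c d)) :
    (D.side a b ∩ D.side c d).Nonempty := by
  obtain ⟨v, hv⟩ := ℰ.e2 _ _ _ _ _ _ h1 h2 h1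
  obtain ⟨⟨hv1, hv2⟩, -⟩ := hv
  simp only [TreeCutDecomp.sideBags, Set.mem_iUnion, exists_prop] at hv1 hv2
  obtain ⟨s, hs, hvs⟩ := hv1
  obtain ⟨s', hs', hvs'⟩ := hv2
  exact ⟨s, hs, bag_unique D hvs' hvs ▸ hs'⟩

/-- combining two tangle cuts -/
lemma combine {A₁ A₂ : Set V} (h1 : ℰ.mem A₁ A₁ᶜ) (h2 : ℰ.mem A₂ A₂ᶜ)
    (horder : G.cutOrder (A₁ ∪ A₂) (A₁ ∪ A₂)ᶜ < θ) :
    ℰ.mem (A₁ ∪ A₂) (A₁ ∪ A₂)ᶜ := by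
  rcases ℰ.e1 (A₁ ∪ A₂) (A₁ ∪ A₂)ᶜ ⟨disjoint_compl_right, Set.union_compl_self _⟩
      horder with h | h
  · exact h
  · exfalso
    obtain ⟨v, hv⟩ := ℰ.e2 _ _ _ _ _ _ h1 h2 h
    obtain ⟨⟨hv1, hv2⟩, hv3⟩ := hv
    rcases hv3 with h' | h'
    · exact hv1 h'
    · exact hv2 h'

end Tangle

section Cells
variable {θ : ℕ}

lemma cellRel_symm (D : TreeCutDecomp G T) {x y : T} (h : D.cellRel θ x y) :
    D.cellRel θ y x := by
  refine @Std.Symm.symm _ _ (@Relation.ReflTransGen.stdSymm _ _ ⟨?_⟩) _ _ h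
  rintro u v ⟨hadj, hcard⟩
  exact ⟨hadj.symm, by rwa [adh_symm]⟩

lemma cellRel_trans (D : TreeCutDecomp G T) {x y z : T} (h : D.cellRel θ x y)
    (h' : D.cellRel θ y z) : D.cellRel θ x z := Relation.ReflTransGen.trans h h'

/-- the workhorse: big-edge components don't cross small edges -/
lemma cellRel_side (D : TreeCutDecomp G T) {a b x s : T} (hab : D.tree.Adj a b)
    (hsmall : (D.adhEdges a b).ncard < θ) (hrel : D.cellRel θ x s)
    (hx : x ∈ D.side a b) : s ∈ D.side a b := by
  induction hrel with
  | refl => exact hx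
  | tail _ hstep ih =>
    rename_i u v _
    obtain ⟨hadj, hbig⟩ := hstep
    by_cases h1 : u = a ∧ v = b
    · rw [h1.1, h1.2] at hbig; omega
    by_cases h2 : u = b ∧ v = a
    · rw [h2.1, h2.2, adh_symm] at hbig; omega
    exact side_closed D ih hadj h1 h2

lemma compRel_symm (D : TreeCutDecomp G T) {C : Set T} {x y : T}
    (h : D.compRel C x y) : D.compRel C y x := by
  refine @Std.Symm.symm _ _ (@Relation.ReflTransGen.stdSymm _ _ ⟨?_⟩) _ _ h
  rintro u v ⟨hadj, hu, hv⟩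
  exact ⟨hadj.symm, hv, hu⟩

lemma compRel_trans (D : TreeCutDecomp G T) {C : Set T} {x y z : T}
    (h : D.compRel C x y) (h' : D.compRel C y z) : D.compRel C x z :=
  Relation.ReflTransGen.trans h h'

lemma compRel_not_mem (D : TreeCutDecomp G T) {C : Set T} {x y : T}
    (h : D.compRel C x y) (hx : x ∉ C) : y ∉ C := by
  induction h with
  | refl => exact hx
  | tail _ hstep _ => exact hstep.2.2

/-- walking from outside C into C, there is a boundary edge -/
lemma first_entry (D : TreeCutDecomp G T) {C : Set T} {x y : T}
    (h : Relation.ReflTransGen D.tree.Adj x y) (hx : x ∉ C) :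
    D.compRel C x y ∨ ∃ a b, D.compRel C x a ∧ D.tree.Adj a b ∧ a ∉ C ∧ b ∈ C := by
  induction h with
  | refl => exact Or.inl Relation.ReflTransGen.refl
  | tail _ hadj ih =>
    rename_i m y _
    rcases ih with hc | hfound
    · have hm : m ∉ C := compRel_not_mem D hc hx
      by_cases hy : y ∈ C
      · exact Or.inr ⟨m, y, hc, hadj, hm, hy⟩
      · exact Or.inl (Relation.ReflTransGen.tail hc ⟨hadj, hm, hy⟩)
    · exact Or.inr hfound

/-- boundary edges of cells are small -/
lemma boundary_small (D : TreeCutDecomp G T) {t a b : T} (hab : D.tree.Adj a b)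
    (ha : a ∉ {s | D.cellRel θ t s}) (hb : b ∈ {s | D.cellRel θ t s}) :
    (D.adhEdges a b).ncard < θ := by
  by_contra h
  push_neg at h
  exact ha (Relation.ReflTransGen.tail hb ⟨hab.symm, by rwa [adh_symm]⟩)

/-- the component of `a` in `T - C` is exactly the side of the boundary edge -/
lemma comp_eq_side (D : TreeCutDecomp G T) {t a b : T} (hab : D.tree.Adj a b)
    (ha : a ∉ {s | D.cellRel θ t s}) (hb : b ∈ {s | D.cellRel θ t s}) :
    {s | D.compRel {s | D.cellRel θ t s} a s} = D.side a b := by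
  set C := {s | D.cellRel θ t s} with hC
  have hsmall : (D.adhEdges a b).ncard < θ := boundary_small D hab ha hb
  have hCside : ∀ s ∈ C, s ∈ D.side b a := by
    intro s hs
    exact cellRel_side D hab.symm (by rwa [adh_symm]) (cellRel_trans D (cellRel_symm D hb) hs)
      (side_self D b a)
  ext s
  simp only [Set.mem_setOf_eq]
  constructor
  · intro h
    refine side_mem_of_reflTransGen D (side_self D a b) ?_
    refine Relation.ReflTransGen.mono ?_ _ _ h
    rintro u v ⟨hadj, hu, hv⟩
    refine ⟨hadj, ?_, ?_⟩
    · rintro ⟨-, rfl⟩; exact hv hb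
    · rintro ⟨rfl, -⟩; exact hu hb
  · intro h
    have key : ∀ s', Relation.ReflTransGen
        (fun x y => D.tree.Adj x y ∧ ¬(x = a ∧ y = b) ∧ ¬(x = b ∧ y = a)) a s' →
        s' ∈ D.side a b ∧ D.compRel C a s' := by
      intro s' hs'
      induction hs' with
      | refl => exact ⟨side_self D a b, Relation.ReflTransGen.refl⟩
      | tail _ hstep ih =>
        rename_i u v _
        obtain ⟨hadj, h1, h2⟩ := hstep
        have hv : v ∈ D.side a b := side_closed D ih.1 hadj h1 h2
        have huC : u ∉ C := fun hu =>
          Set.disjoint_left.mp (side_disjoint D hab) ih.1 (hCside u hu)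
        have hvC : v ∉ C := fun hv' =>
          Set.disjoint_left.mp (side_disjoint D hab) hv (hCside v hv')
        exact ⟨hv, Relation.ReflTransGen.tail ih.2 ⟨hadj, huC, hvC⟩⟩
    exact (key s h).2

lemma cell_subset_side (D : TreeCutDecomp G T) {t a b : T} (hab : D.tree.Adj a b)
    (ha : a ∉ {s | D.cellRel θ t s}) (hb : b ∈ {s | D.cellRel θ t s}) :
    {s | D.cellRel θ t s} ⊆ D.side b a := by
  intro s hs
  have hsmall : (D.adhEdges a b).ncard < θ := boundary_small D hab ha hb
  exact cellRel_side D hab.symm (by rwa [adh_symm]) (cellRel_trans D (cellRel_symm D hb) hs)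
    (side_self D b a)

end Cells

section Torso
variable {θ : ℕ}

lemma torso_of_incident (D : TreeCutDecomp G T) (C : Set T) {e : E}
    (h : G.incident (BB D C) e) : e ∈ D.torsoEdges C := by
  obtain ⟨x, hxe, hxB⟩ := h
  simp only [BB, Set.mem_iUnion, exists_prop] at hxB
  obtain ⟨s, hsC, hxs⟩ := hxB
  rintro ⟨s', hs', hall⟩
  have hx := hall x hxe
  simp only [TreeCutDecomp.compBags, Set.mem_iUnion, exists_prop, Set.mem_setOf_eq] at hx
  obtain ⟨s'', hrel, hxs''⟩ := hx
  exact compRel_not_mem D hrel hs' (bag_unique D hxs'' hxs ▸ hsC)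

lemma crossing_torso (D : TreeCutDecomp G T) {C U : Set T}
    (hU : ∀ s ∈ U, s ∉ C) (hclosed : ∀ s ∈ U, ∀ s', D.compRel C s s' → s' ∈ U) :
    {e | G.crosses (BB D U) (BB D U)ᶜ e} ⊆ D.torsoEdges C := by
  rintro e ⟨⟨u, hue, huB⟩, ⟨w, hwe, hwB⟩⟩
  simp only [BB, Set.mem_iUnion, exists_prop] at huB
  obtain ⟨s₁, hs₁, hus₁⟩ := huB
  rintro ⟨s, hsC, hall⟩
  have hu := hall u hue
  have hw := hall w hwe
  simp only [TreeCutDecomp.compBags, Set.mem_iUnion, exists_prop, Set.mem_setOf_eq] at hu hw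
  obtain ⟨s₂, hrel₂, hus₂⟩ := hu
  obtain ⟨w₂, hrelw, hww₂⟩ := hw
  have hs₂ : s₂ = s₁ := bag_unique D hus₂ hus₁
  have hrel : D.compRel C s₁ w₂ :=
    compRel_trans D (compRel_symm D (hs₂ ▸ hrel₂)) hrelw
  have hw₂U : w₂ ∈ U := hclosed s₁ hs₁ w₂ hrel
  apply hwB
  simp only [BB, Set.mem_iUnion, exists_prop]
  exact ⟨w₂, hw₂U, hww₂⟩

lemma BB_union (D : TreeCutDecomp G T) (U W : Set T) :
    BB D (U ∪ W) = BB D U ∪ BB D W := Set.biUnion_union U W _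

lemma BB_empty (D : TreeCutDecomp G T) : BB D (∅ : Set T) = ∅ := by
  simp [BB]

/-- the torso of the chosen cell is large -/
lemma torso_large [Fintype E] (hθ : 0 < θ) (ℰ : EdgeTangle G θ) (D : TreeCutDecomp G T)
    (t : T)
    (hprop : ∀ a b : T, D.tree.Adj a b → (D.adhEdges a b).ncard < θ →
      {s | D.cellRel θ t s} ⊆ D.side a b →
      ℰ.mem (D.sideBags b a) (D.sideBags a b)) :
    θ ≤ (D.torsoEdges {s | D.cellRel θ t s}).ncard := by
  have _inst := D.finite
  set C := {s | D.cellRel θ t s} with hC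
  by_contra htorso
  push_neg at htorso
  have htC : t ∈ C := Relation.ReflTransGen.refl
  -- main induction
  have main : ∀ n (U : Set T), U.ncard ≤ n → (∀ s ∈ U, s ∉ C) →
      (∀ s ∈ U, ∀ s', D.compRel C s s' → s' ∈ U) →
      ℰ.mem (BB D U) (BB D U)ᶜ := by
    intro n
    induction n with
    | zero =>
      intro U hcard _ _
      have : U = ∅ := by
        rw [← Set.ncard_eq_zero U.toFinite]; omega
      rw [this, BB_empty, Set.compl_empty]
      exact mem_empty_univ ℰ hθ
    | succ n ih =>
      intro U hcard hUC hclosed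
      rcases Set.eq_empty_or_nonempty U with rfl | ⟨s₀, hs₀⟩
      · rw [BB_empty, Set.compl_empty]
        exact mem_empty_univ ℰ hθ
      have hs₀C : s₀ ∉ C := hUC s₀ hs₀
      have hreach : Relation.ReflTransGen D.tree.Adj s₀ t := by
        rw [← SimpleGraph.reachable_iff_reflTransGen]
        exact D.isTree.isConnected.preconnected s₀ t
      rcases first_entry D hreach hs₀C with hcomp | ⟨a, b, hs₀a, hab, haC, hbC⟩
      · exact absurd htC (compRel_not_mem D hcomp hs₀C)
      set K := {s | D.compRel C a s} with hK
      have hKside : K = D.side a b := comp_eq_side D hab haC hbC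
      have haK : a ∈ K := Relation.ReflTransGen.refl
      have hKU : K ⊆ U := by
        intro s hs
        exact hclosed s₀ hs₀ s (compRel_trans D hs₀a hs)
      have hsmall : (D.adhEdges a b).ncard < θ := boundary_small D hab haC hbC
      have memK : ℰ.mem (BB D K) (BB D K)ᶜ := by
        have := hprop b a hab.symm (by rwa [adh_symm]) (cell_subset_side D hab haC hbC)
        rwa [sideBags_eq_BB, ← hKside, sideBags_compl D hab, sideBags_eq_BB, ← hKside] at this
      set U' := U \ K with hU'
      have hU'C : ∀ s ∈ U', s ∉ C := fun s hs => hUC s hs.1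
      have hU'closed : ∀ s ∈ U', ∀ s', D.compRel C s s' → s' ∈ U' := by
        rintro s ⟨hsU, hsK⟩ s' hrel
        exact ⟨hclosed s hsU s' hrel,
          fun hs'K => hsK (compRel_trans D hs'K (compRel_symm D hrel))⟩
      have hcard' : U'.ncard ≤ n := by
        have hss : U' ⊂ U := (Set.ssubset_iff_of_subset Set.diff_subset).mpr
          ⟨a, hKU haK, fun h => h.2 haK⟩
        have hlt : U'.ncard < U.ncard := Set.ncard_lt_ncard hss U.toFinite
        omega
      have memU' := ih U' hcard' hU'C hU'closed
      have hUnion : U = U' ∪ K := (Set.diff_union_of_subset hKU).symm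
      have horder : G.cutOrder (BB D U' ∪ BB D K) (BB D U' ∪ BB D K)ᶜ < θ := by
        rw [← BB_union, ← hUnion]
        calc G.cutOrder (BB D U) (BB D U)ᶜ ≤ (D.torsoEdges C).ncard :=
              Set.ncard_le_ncard (crossing_torso D hUC hclosed) (D.torsoEdges C).toFinite
          _ < θ := htorso
      have hcomb := combine ℰ memU' memK horder
      rwa [← BB_union, ← hUnion] at hcomb
  have hfinal := main (Set.ncard Cᶜ) Cᶜ le_rfl (fun s hs => hs)
    (fun s hs s' hrel => compRel_not_mem D hrel hs)
  rw [BB_compl, compl_compl] at hfinal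
  have h3 := ℰ.e3 _ _ hfinal
  have hle : {e | G.incident (BB D C) e}.ncard ≤ (D.torsoEdges C).ncard :=
    Set.ncard_le_ncard (fun e he => torso_of_incident D C he) (D.torsoEdges C).toFinite
  omega
end Torso

section Exists
variable {θ : ℕ}

/-- there is a node towards which all tangle-oriented small edges point -/
lemma exists_t (ℰ : EdgeTangle G θ) (D : TreeCutDecomp G T) :
    ∃ t : T, ∀ a b : T, D.tree.Adj a b → (D.adhEdges a b).ncard < θ →
      ℰ.mem (D.sideBags b a) (D.sideBags a b) → t ∈ D.side a b := by
  have _inst := D.finite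
  have _ne : Nonempty T := D.isTree.isConnected.nonempty
  set S : Set (T × T) := {p | D.tree.Adj p.1 p.2 ∧ (D.adhEdges p.1 p.2).ncard < θ ∧
    ℰ.mem (D.sideBags p.2 p.1) (D.sideBags p.1 p.2)} with hS
  set f : T → ℕ := fun t => {p | p ∈ S ∧ t ∈ D.side p.1 p.2}.ncard with hf
  obtain ⟨t, hmax⟩ := Finite.exists_max f
  refine ⟨t, fun a b hab hsmall hmem => ?_⟩
  by_contra ht
  have htba : t ∈ D.side b a := by
    rcases side_union D hab t with h | h
    · exact absurd h ht
    · exact h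
  have hincl : {p | p ∈ S ∧ t ∈ D.side p.1 p.2} ⊆ {p | p ∈ S ∧ a ∈ D.side p.1 p.2} := by
    rintro ⟨c, d⟩ ⟨hq, htcd⟩
    refine ⟨hq, ?_⟩
    by_contra hacd
    -- then side c d ⊆ side b a, so disjoint from side a b, contradicting meet
    have key : ∀ y, Relation.ReflTransGen
        (fun x y => D.tree.Adj x y ∧ ¬(x = c ∧ y = d) ∧ ¬(x = d ∧ y = c)) t y →
        y ∈ D.side b a ∧ y ∈ D.side c d := by
      intro y hy
      induction hy with
      | refl => exact ⟨htba, htcd⟩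
      | tail _ hstep ih =>
        rename_i u v _
        obtain ⟨hadj, h1, h2⟩ := hstep
        have hvcd : v ∈ D.side c d := side_closed D ih.2 hadj h1 h2
        refine ⟨?_, hvcd⟩
        by_cases hba : u = b ∧ v = a
        · exact absurd (hba.2 ▸ hvcd) hacd
        by_cases hab' : u = a ∧ v = b
        · exact absurd (side_self D a b)
            (fun h => Set.disjoint_left.mp (side_disjoint D hab) h (hab'.1 ▸ ih.1))
        exact side_closed D ih.1 hadj hba hab'
    have hsub : D.side c d ⊆ D.side b a := by
      intro s hs
      exact (key s (Relation.ReflTransGen.trans (mem_side_symm D htcd) hs)).1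
    obtain ⟨x, hx1, hx2⟩ := meet ℰ D hmem hq.2.2
    exact Set.disjoint_left.mp (side_disjoint D hab) hx1 (hsub hx2)
  have hmemS : (a, b) ∈ {p | p ∈ S ∧ a ∈ D.side p.1 p.2} :=
    ⟨⟨hab, hsmall, hmem⟩, side_self D a b⟩
  have hnot : (a, b) ∉ {p | p ∈ S ∧ t ∈ D.side p.1 p.2} := fun h => ht h.2
  have hss : {p | p ∈ S ∧ t ∈ D.side p.1 p.2} ⊂ {p | p ∈ S ∧ a ∈ D.side p.1 p.2} :=
    ⟨hincl, fun h => hnot (h hmemS)⟩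
  have hlt : f t < f a := Set.ncard_lt_ncard hss (Set.toFinite _)
  exact absurd (hmax a) (not_le.mpr hlt)

end Exists

end TCAux


/-- Let `G` be a graph, `θ` a positive integer, `ℰ` an edge-tangle
of order `θ` in `G`, and `(T,𝒳)` a tree-cut decomposition of `G`. Then there
is a unique `θ`-cell `C` of `(T,𝒳)` such that for every edge `ab` of `T` with
at most one end in `C` (i.e. with `C` contained in the side of `a`) and with
adhesion set of size less than `θ`, the edge-cut `[A_{e,C}, B_{e,C}]` belongs
to `ℰ`, where `B_{e,C}` is the union of the bags in the component of `T − ab`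
containing `C` and `A_{e,C}` is the union of the bags on the other side. -/
theorem edgeTangle_cell {V E T : Type} [Fintype V] [Fintype E]
    (G : Multigraph V E) (θ : ℕ) (hθ : 0 < θ) (ℰ : EdgeTangle G θ)
    (D : TreeCutDecomp G T) :
    ∃! C : Set T, D.IsCell θ C ∧
      ∀ a b : T, D.tree.Adj a b → (D.adhEdges a b).ncard < θ →
        C ⊆ D.side a b → ℰ.mem (D.sideBags b a) (D.sideBags a b) := by
  classical
  have _inst := D.finite
  obtain ⟨t, hmax⟩ := TCAux.exists_t ℰ D
  set C := {s | D.cellRel θ t s} with hC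
  have htC : t ∈ C := Relation.ReflTransGen.refl
  have hprop : ∀ a b : T, D.tree.Adj a b → (D.adhEdges a b).ncard < θ →
      C ⊆ D.side a b → ℰ.mem (D.sideBags b a) (D.sideBags a b) := by
    intro a b hab hsmall hsub
    rcases TCAux.orient ℰ D hab hsmall with h | h
    · exfalso
      have ht := hmax b a hab.symm (by rwa [TCAux.adh_symm]) h
      exact Set.disjoint_left.mp (TCAux.side_disjoint D hab) (hsub htC) ht
    · exact h
  refine ⟨C, ⟨⟨⟨t, rfl⟩, TCAux.torso_large hθ ℰ D t hprop⟩, hprop⟩, ?_⟩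
  rintro C' ⟨⟨⟨t', rfl⟩, -⟩, hprop'⟩
  by_cases hrel : D.cellRel θ t t'
  · ext s
    simp only [Set.mem_setOf_eq]
    constructor
    · exact fun h => TCAux.cellRel_trans D hrel h
    · exact fun h => TCAux.cellRel_trans D (TCAux.cellRel_symm D hrel) h
  · exfalso
    have ht'C : t' ∉ C := hrel
    have hreach : Relation.ReflTransGen D.tree.Adj t' t := by
      rw [← SimpleGraph.reachable_iff_reflTransGen]
      exact D.isTree.isConnected.preconnected t' t
    rcases TCAux.first_entry D hreach ht'C with hcomp | ⟨a, b, ht'a, hab, haC, hbC⟩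
    · exact absurd htC (TCAux.compRel_not_mem D hcomp ht'C)
    have hsmall : (D.adhEdges a b).ncard < θ := TCAux.boundary_small D hab haC hbC
    have hCsub : C ⊆ D.side b a := TCAux.cell_subset_side D hab haC hbC
    have ht'side : t' ∈ D.side a b := by
      rw [← TCAux.comp_eq_side D hab haC hbC]
      exact TCAux.compRel_symm D ht'a
    have hC'sub : {s | D.cellRel θ t' s} ⊆ D.side a b := by
      intro s hs
      exact TCAux.cellRel_side D hab hsmall hs ht'side
    have h1 := hprop b a hab.symm (by rwa [TCAux.adh_symm]) hCsub
    have h2 := hprop' a b hab hsmall hC'sub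
    exact TCAux.not_both_orient ℰ D hab h1 h2
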